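/- Let f(x₀,x₁,x₂) be the determinant of the 3×3 symmetric matrix T(x) with rows: (100x₀² + 192x₁², −222x₀x₁, −70x₀x₂), (−222x₀x₁, 27x₀² + 225x₁² + 192x₂², −222x₁x₂), and (−70x₀x₂, −222x₁x₂, 165x₀² + 27x₁² + 100x₂²). Then f is a nonnegative ternary sextic that does not span an extreme ray of the cone of nonnegative ternary sextics: there exist nonnegative ternary sextics g, h with f = g + h such that g is not a scalar multiple of f. -/

import Mathlib

open MvPolynomial

/-- The acoustic tensor of the Buckley–Šivic extremal biquadratic (with `p = 1/2`,
`q = 3/4`), as a symmetric `3 × 3` matrix of quadratic forms. -/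
noncomputable def acousticT : Matrix (Fin 3) (Fin 3) (MvPolynomial (Fin 3) ℝ) :=
  !![100 * X 0 ^ 2 + 192 * X 1 ^ 2, -222 * (X 0 * X 1), -70 * (X 0 * X 2);
     -222 * (X 0 * X 1), 27 * X 0 ^ 2 + 225 * X 1 ^ 2 + 192 * X 2 ^ 2,
       -222 * (X 1 * X 2);
     -70 * (X 0 * X 2), -222 * (X 1 * X 2),
       165 * X 0 ^ 2 + 27 * X 1 ^ 2 + 100 * X 2 ^ 2]

/-- The summand `g`: a positive multiple of a perfect square. -/
noncomputable def gPoly : MvPolynomial (Fin 3) ℝ :=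
  C 90000 * (X 0 ^ 3 - C 4 * X 0 * X 1 ^ 2 + C 3 * X 0 * X 2 ^ 2) ^ 2

/-- The summand `h = det T - g`, written explicitly. -/
noncomputable def hPoly : MvPolynomial (Fin 3) ℝ :=
  C 355500 * X 0 ^ 6 + C (-2771100) * (X 0 ^ 4 * X 1 ^ 2) +
    C 2765700 * (X 0 ^ 4 * X 2 ^ 2) + C 5104800 * (X 0 ^ 2 * X 1 ^ 4) +
    C (-6329700) * (X 0 ^ 2 * X 1 ^ 2 * X 2 ^ 2) + C 169200 * (X 0 ^ 2 * X 2 ^ 4) +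
    C 1166400 * X 1 ^ 6 + C (-4147200) * (X 1 ^ 4 * X 2 ^ 2) +
    C 3686400 * (X 1 ^ 2 * X 2 ^ 4)

/-- Key real SOS certificate:
`(a² + b² + c²) · h(a,b,c)` is an explicit positive combination of squares. -/
lemma h_sos (a b c : ℝ) :
    (a ^ 2 + b ^ 2 + c ^ 2) *
      (355500 * a ^ 6 - 2771100 * a ^ 4 * b ^ 2 + 2765700 * a ^ 4 * c ^ 2 +
        5104800 * a ^ 2 * b ^ 4 - 6329700 * a ^ 2 * b ^ 2 * c ^ 2 +
        169200 * a ^ 2 * c ^ 4 + 1166400 * b ^ 6 - 4147200 * b ^ 4 * c ^ 2 +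
        3686400 * b ^ 2 * c ^ 4) =
    5247300 * (-(39232 / 157419) * b ^ 2 * c ^ 2 + (2452 / 17491) * b ^ 4 -
        (99521 / 157419) * a ^ 2 * c ^ 2 + a ^ 2 * b ^ 2 - (4526 / 17491) * a ^ 4) ^ 2 +
      (72647700 / 17491) * ((256 / 9) * b ^ 2 * c ^ 2 - 16 * b ^ 4 -
        (121 / 9) * a ^ 2 * c ^ 2 + a ^ 4) ^ 2 +
      705600 * (-(16 / 7) * b * c ^ 3 + (9 / 7) * b ^ 3 * c + a ^ 2 * b * c) ^ 2 +
      (5316500 / 3) * (-(12759 / 106330) * a * c ^ 3 + a * b ^ 2 * c -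
        (93571 / 106330) * a ^ 3 * c) ^ 2 +
      (1527783465 / 10633) * (-(a * c ^ 3) + a ^ 3 * c) ^ 2 +
      300000 * (3 * a * b * c ^ 2 - 4 * a * b ^ 3 + a ^ 3 * b) ^ 2 := by
  ring

/-- Nonnegativity of the explicit form of `h`. -/
lemma h_nonneg (a b c : ℝ) :
    0 ≤ 355500 * a ^ 6 - 2771100 * a ^ 4 * b ^ 2 + 2765700 * a ^ 4 * c ^ 2 +
        5104800 * a ^ 2 * b ^ 4 - 6329700 * a ^ 2 * b ^ 2 * c ^ 2 +
        169200 * a ^ 2 * c ^ 4 + 1166400 * b ^ 6 - 4147200 * b ^ 4 * c ^ 2 +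
        3686400 * b ^ 2 * c ^ 4 := by
  rcases eq_or_ne (a ^ 2 + b ^ 2 + c ^ 2) 0 with hz | hz
  · have ha : a = 0 := by nlinarith [sq_nonneg a, sq_nonneg b, sq_nonneg c]
    have hb : b = 0 := by nlinarith [sq_nonneg a, sq_nonneg b, sq_nonneg c]
    have hc : c = 0 := by nlinarith [sq_nonneg a, sq_nonneg b, sq_nonneg c]
    simp [ha, hb, hc]
  · have hpos : 0 < a ^ 2 + b ^ 2 + c ^ 2 := by
      rcases lt_or_eq_of_le (by positivity : (0:ℝ) ≤ a ^ 2 + b ^ 2 + c ^ 2) with h | h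
      · exact h
      · exact absurd h.symm hz
    by_contra hneg
    push_neg at hneg
    have hlt : (a ^ 2 + b ^ 2 + c ^ 2) *
        (355500 * a ^ 6 - 2771100 * a ^ 4 * b ^ 2 + 2765700 * a ^ 4 * c ^ 2 +
          5104800 * a ^ 2 * b ^ 4 - 6329700 * a ^ 2 * b ^ 2 * c ^ 2 +
          169200 * a ^ 2 * c ^ 4 + 1166400 * b ^ 6 - 4147200 * b ^ 4 * c ^ 2 +
          3686400 * b ^ 2 * c ^ 4) < 0 := mul_neg_of_pos_of_neg hpos hneg
    rw [h_sos] at hlt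
    have h1 : (0:ℝ) ≤ 5247300 * (-(39232 / 157419) * b ^ 2 * c ^ 2 + (2452 / 17491) * b ^ 4 -
        (99521 / 157419) * a ^ 2 * c ^ 2 + a ^ 2 * b ^ 2 - (4526 / 17491) * a ^ 4) ^ 2 := by
      positivity
    have h2 : (0:ℝ) ≤ (72647700 / 17491) * ((256 / 9) * b ^ 2 * c ^ 2 - 16 * b ^ 4 -
        (121 / 9) * a ^ 2 * c ^ 2 + a ^ 4) ^ 2 := by positivity
    have h3 : (0:ℝ) ≤ 705600 * (-(16 / 7) * b * c ^ 3 + (9 / 7) * b ^ 3 * c + a ^ 2 * b * c) ^ 2 := by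
      positivity
    have h4 : (0:ℝ) ≤ (5316500 / 3) * (-(12759 / 106330) * a * c ^ 3 + a * b ^ 2 * c -
        (93571 / 106330) * a ^ 3 * c) ^ 2 := by positivity
    have h5 : (0:ℝ) ≤ (1527783465 / 10633) * (-(a * c ^ 3) + a ^ 3 * c) ^ 2 := by positivity
    have h6 : (0:ℝ) ≤ 300000 * (3 * a * b * c ^ 2 - 4 * a * b ^ 3 + a ^ 3 * b) ^ 2 := by positivity
    linarith

lemma det_eq : acousticT.det = gPoly + hPoly := by
  simp only [acousticT, gPoly, hPoly, Matrix.det_fin_three, Matrix.cons_val', Matrix.cons_val_zero,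
    Matrix.cons_val_one, Matrix.head_cons, Matrix.empty_val', Matrix.cons_val_fin_one,
    Matrix.head_fin_const, Matrix.of_apply, Matrix.cons_val_two, Matrix.tail_cons, map_neg, map_ofNat]
  ring

lemma eval_gPoly (x : Fin 3 → ℝ) :
    eval x gPoly = 90000 * (x 0 ^ 3 - 4 * x 0 * x 1 ^ 2 + 3 * x 0 * x 2 ^ 2) ^ 2 := by
  simp [gPoly]

lemma eval_hPoly (x : Fin 3 → ℝ) :
    eval x hPoly =
      355500 * (x 0) ^ 6 - 2771100 * (x 0) ^ 4 * (x 1) ^ 2 + 2765700 * (x 0) ^ 4 * (x 2) ^ 2 +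
        5104800 * (x 0) ^ 2 * (x 1) ^ 4 - 6329700 * (x 0) ^ 2 * (x 1) ^ 2 * (x 2) ^ 2 +
        169200 * (x 0) ^ 2 * (x 2) ^ 4 + 1166400 * (x 1) ^ 6 -
        4147200 * (x 1) ^ 4 * (x 2) ^ 2 + 3686400 * (x 1) ^ 2 * (x 2) ^ 4 := by
  simp [hPoly]
  ring

lemma gPoly_homog : gPoly.IsHomogeneous 6 := by
  have hp : (X 0 ^ 3 - C 4 * X 0 * X 1 ^ 2 + C 3 * X 0 * X 2 ^ 2 :
      MvPolynomial (Fin 3) ℝ).IsHomogeneous 3 := by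
    have h1 : (X 0 ^ 3 : MvPolynomial (Fin 3) ℝ).IsHomogeneous 3 := isHomogeneous_X_pow _ _
    have h2 : (C 4 * X 0 * X 1 ^ 2 : MvPolynomial (Fin 3) ℝ).IsHomogeneous 3 := by
      have := (((isHomogeneous_C (Fin 3) (4:ℝ)).mul (isHomogeneous_X ℝ 0)).mul
        (isHomogeneous_X_pow (R := ℝ) (1 : Fin 3) 2))
      simpa using this
    have h3 : (C 3 * X 0 * X 2 ^ 2 : MvPolynomial (Fin 3) ℝ).IsHomogeneous 3 := by
      have := (((isHomogeneous_C (Fin 3) (3:ℝ)).mul (isHomogeneous_X ℝ 0)).mul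
        (isHomogeneous_X_pow (R := ℝ) (2 : Fin 3) 2))
      simpa using this
    have hneg : (-(C 4 * X 0 * X 1 ^ 2) : MvPolynomial (Fin 3) ℝ).IsHomogeneous 3 := by
      have := h2.C_mul (-1 : ℝ)
      simpa [map_neg] using this
    have := (h1.add hneg).add h3
    simpa [sub_eq_add_neg] using this
  have := hp.pow 2
  have h6 : (((X 0 ^ 3 - C 4 * X 0 * X 1 ^ 2 + C 3 * X 0 * X 2 ^ 2 :
      MvPolynomial (Fin 3) ℝ)) ^ 2).IsHomogeneous 6 := by simpa using this
  exact h6.C_mul _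

lemma hPoly_homog : hPoly.IsHomogeneous 6 := by
  unfold hPoly
  repeat' apply IsHomogeneous.add
  all_goals
    first
    | with_reducible exact isHomogeneous_C_mul_X_pow _ _ _
    | · apply IsHomogeneous.C_mul
        first
        | with_reducible exact (isHomogeneous_X_pow (R := ℝ) _ _).mul (isHomogeneous_X_pow (R := ℝ) _ _)
        | with_reducible exact ((isHomogeneous_X_pow (R := ℝ) _ _).mul
            (isHomogeneous_X_pow (R := ℝ) _ _)).mul (isHomogeneous_X_pow (R := ℝ) _ _)

/-- The determinant `f = det T(x)` of the above matrix is a nonnegative ternary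
sextic which does not span an extreme ray of the cone of nonnegative ternary
sextics: `f = g + h` with `g, h` nonnegative ternary sextics and `g` not a scalar
multiple of `f`. -/
theorem acoustic_determinant_not_extremal :
    (acousticT.det).IsHomogeneous 6 ∧
    (∀ x : Fin 3 → ℝ, 0 ≤ eval x acousticT.det) ∧
    ∃ g h : MvPolynomial (Fin 3) ℝ,
      g.IsHomogeneous 6 ∧ (∀ x : Fin 3 → ℝ, 0 ≤ eval x g) ∧
      h.IsHomogeneous 6 ∧ (∀ x : Fin 3 → ℝ, 0 ≤ eval x h) ∧
      acousticT.det = g + h ∧ ¬∃ c : ℝ, g = c • acousticT.det := by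
  have hg0 : ∀ x : Fin 3 → ℝ, 0 ≤ eval x gPoly := by
    intro x
    rw [eval_gPoly]
    positivity
  have hh0 : ∀ x : Fin 3 → ℝ, 0 ≤ eval x hPoly := by
    intro x
    rw [eval_hPoly]
    exact h_nonneg (x 0) (x 1) (x 2)
  refine ⟨?_, ?_, gPoly, hPoly, gPoly_homog, hg0, hPoly_homog, hh0, det_eq, ?_⟩
  · rw [det_eq]; exact gPoly_homog.add hPoly_homog
  · intro x
    rw [det_eq, map_add]
    exact add_nonneg (hg0 x) (hh0 x)
  · rintro ⟨c, hc⟩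
    have h1 := congrArg (eval (![0, 1, 0] : Fin 3 → ℝ)) hc
    rw [smul_eval, det_eq, map_add, eval_gPoly, eval_hPoly] at h1
    simp only [Matrix.cons_val_zero, Matrix.cons_val_one, Matrix.head_cons,
      Matrix.cons_val_two, Matrix.tail_cons] at h1
    norm_num at h1
    -- h1 : 0 = c * 1166400  (roughly); deduce c = 0
    have hc0 : c = 0 := by nlinarith [h1]
    rw [hc0, zero_smul] at hc
    have h2 := congrArg (eval (![1, 0, 0] : Fin 3 → ℝ)) hc
    rw [eval_gPoly] at h2
    simp at h2
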